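/- Let p_1, …, p_{n+2} be points in ℝ^k with k ≤ n such that |p_i − p_j| ≥ r for every i ≠ j. Then there exist a constant C_{n,k} > 0 depending only on n and k, and a line ℓ in ℝ^k through the origin, such that the orthogonal projections of the points onto ℓ satisfy |Π_ℓ(p_i) − Π_ℓ(p_j)| ≥ C_{n,k} r for every i ≠ j. -/

import Mathlib

open Metric
open scoped RealInnerProductSpace

section Aux

variable {E : Type*} [NormedAddCommGroup E] [InnerProductSpace ℝ E]

/-- A unit vector not orthogonal to any of finitely many nonzero vectors. -/
lemma exists_unit_not_orthogonal [FiniteDimensional ℝ E] {I : Type*} [Fintype I] [Nonempty I]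
    (q : I → E) (hq : ∀ m, q m ≠ 0) :
    ∃ v : E, ‖v‖ = 1 ∧ ∀ m, ⟪q m, v⟫ ≠ 0 := by
  classical
  set s : Finset (Subspace ℝ E) := Finset.univ.image (fun m => (ℝ ∙ q m)ᗮ) with hs
  have htop : ⊤ ∉ s := by
    intro h
    rw [hs, Finset.mem_image] at h
    obtain ⟨m, -, hm⟩ := h
    have : q m ∈ (ℝ ∙ q m)ᗮ := by rw [hm]; trivial
    rw [Submodule.mem_orthogonal_singleton_iff_inner_right] at this
    exact hq m (inner_self_eq_zero.mp this)
  have hne := Subspace.biUnion_ne_univ_of_top_notMem htop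
  rw [Set.ne_univ_iff_exists_notMem] at hne
  obtain ⟨w, hw⟩ := hne
  simp only [Set.mem_iUnion, not_exists] at hw
  have hworth : ∀ m, ⟪q m, w⟫ ≠ 0 := by
    intro m h
    exact hw _ (Finset.mem_image_of_mem _ (Finset.mem_univ m))
      (Submodule.mem_orthogonal_singleton_iff_inner_right.mpr h)
  have hw0 : w ≠ 0 := by
    intro h
    obtain ⟨m⟩ := (inferInstance : Nonempty I)
    exact hworth m (by rw [h, inner_zero_right])
  refine ⟨‖w‖⁻¹ • w, ?_, ?_⟩
  · rw [norm_smul, norm_inv, norm_norm, inv_mul_cancel₀ (norm_ne_zero_iff.mpr hw0)]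
  · intro m
    rw [real_inner_smul_right]
    exact mul_ne_zero (inv_ne_zero (norm_ne_zero_iff.mpr hw0)) (hworth m)

/-- Uniform lower bound, by compactness: there is `C > 0` such that for any family of unit
vectors indexed by a fixed finite nonempty type, some unit direction has inner product at
least `C` in absolute value with all of them. -/
lemma exists_uniform_direction_bound [FiniteDimensional ℝ E] [Nontrivial E]
    (I : Type*) [Fintype I] [Nonempty I] :
    ∃ C : ℝ, 0 < C ∧ ∀ q : I → E, (∀ m, ‖q m‖ = 1) →
      ∃ v : E, ‖v‖ = 1 ∧ ∀ m, C ≤ |⟪q m, v⟫| := by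
  classical
  set K : Set (I → E) := Set.univ.pi (fun _ => sphere (0 : E) 1) with hKdef
  have hK : IsCompact K := isCompact_univ_pi (fun _ => isCompact_sphere 0 1)
  have hmemK : ∀ q : I → E, q ∈ K ↔ ∀ m, ‖q m‖ = 1 := by
    intro q
    simp [hKdef, Set.mem_univ_pi, mem_sphere_iff_norm]
  -- index type for the cover
  set ι : Type _ := {x : E × ℝ // ‖x.1‖ = 1 ∧ 0 < x.2} with hι
  set U : ι → Set (I → E) := fun i => {q | ∀ m, i.1.2 < |⟪q m, i.1.1⟫|} with hU
  have hUopen : ∀ i, IsOpen (U i) := by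
    intro i
    have : U i = ⋂ m, {q : I → E | i.1.2 < |⟪q m, i.1.1⟫|} := by
      ext q; simp [hU, Set.mem_iInter]
    rw [this]
    refine isOpen_iInter_of_finite (fun m => ?_)
    have hc : Continuous fun q : I → E => |⟪q m, i.1.1⟫| :=
      (Continuous.inner (continuous_apply m) continuous_const).abs
    exact isOpen_lt continuous_const hc
  have hcover : K ⊆ ⋃ i, U i := by
    intro q hq
    have hq1 : ∀ m, ‖q m‖ = 1 := (hmemK q).mp hq
    obtain ⟨v, hv1, hv⟩ := exists_unit_not_orthogonal q
      (fun m => by intro h; simpa [h] using hq1 m)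
    set δ : ℝ := (Finset.univ.inf' Finset.univ_nonempty (fun m => |⟪q m, v⟫|)) / 2 with hδ
    have hδpos : 0 < δ := by
      apply half_pos
      rw [Finset.lt_inf'_iff]
      intro m _
      exact abs_pos.mpr (hv m)
    refine Set.mem_iUnion.mpr ⟨⟨(v, δ), hv1, hδpos⟩, fun m => ?_⟩
    have h1 : Finset.univ.inf' Finset.univ_nonempty (fun m => |⟪q m, v⟫|) ≤ |⟪q m, v⟫| :=
      Finset.inf'_le _ (Finset.mem_univ m)
    have h2 : δ < Finset.univ.inf' Finset.univ_nonempty (fun m => |⟪q m, v⟫|) := by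
      rw [hδ]
      exact half_lt_self (by linarith [hδpos, hδ])
    exact lt_of_lt_of_le h2 h1
  obtain ⟨t, ht⟩ := hK.elim_finite_subcover U hUopen hcover
  -- t is nonempty since K is nonempty
  obtain ⟨e, he0⟩ := exists_ne (0 : E)
  have heK : (fun _ : I => ‖e‖⁻¹ • e) ∈ K := by
    rw [hmemK]
    intro m
    rw [norm_smul, norm_inv, norm_norm, inv_mul_cancel₀ (norm_ne_zero_iff.mpr he0)]
  have htne : t.Nonempty := by
    rcases Set.mem_iUnion₂.mp (ht heK) with ⟨i, hi, -⟩
    exact ⟨i, hi⟩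
  refine ⟨t.inf' htne (fun i => i.1.2), ?_, ?_⟩
  · rw [Finset.lt_inf'_iff]
    exact fun i _ => i.2.2
  · intro q hq1
    rcases Set.mem_iUnion₂.mp (ht ((hmemK q).mpr hq1)) with ⟨i, hi, hqi⟩
    refine ⟨i.1.1, i.2.1, fun m => ?_⟩
    exact le_of_lt (lt_of_le_of_lt (Finset.inf'_le _ hi) (hqi m))

end Aux

/-- Projection of separated points on a line: there is a constant `C_{n,k} > 0` such that for
any `r`-separated points `p_1, …, p_{n+2}` in `ℝ^k` (`k ≤ n`), there is a line through the
origin whose direction `v` satisfies `|Π_ℓ(p_i) − Π_ℓ(p_j)| ≥ C_{n,k} r` for `i ≠ j`. -/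
theorem stmt5 (n k : ℕ) (hk : k ≤ n) :
    ∃ C : ℝ, 0 < C ∧
      ∀ (r : ℝ), 0 < r →
      ∀ p : Fin (n + 2) → EuclideanSpace ℝ (Fin k),
        (∀ i j, i ≠ j → r ≤ dist (p i) (p j)) →
        ∃ v : EuclideanSpace ℝ (Fin k), ‖v‖ = 1 ∧
          ∀ i j, i ≠ j →
            C * r ≤ dist
              (Submodule.orthogonalProjectionOnto (Submodule.span ℝ {v}) (p i))
              (Submodule.orthogonalProjectionOnto (Submodule.span ℝ {v}) (p j)) := by
  classical
  rcases Nat.eq_zero_or_pos k with hk0 | hkpos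
  · -- `k = 0`: the hypothesis is contradictory since all points coincide
    subst hk0
    refine ⟨1, one_pos, fun r hr p hp => ?_⟩
    exfalso
    haveI : Subsingleton (EuclideanSpace ℝ (Fin 0)) := by
      unfold EuclideanSpace PiLp
      exact (WithLp.equiv 2 _).subsingleton
    have h01 : (0 : Fin (n + 2)) ≠ 1 := zero_ne_one
    have := hp 0 1 h01
    rw [Subsingleton.elim (p 0) (p 1), dist_self] at this
    linarith
  · haveI : Nontrivial (EuclideanSpace ℝ (Fin k)) :=
      Module.nontrivial_of_finrank_pos (R := ℝ) (by rwa [finrank_euclideanSpace_fin])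
    set I := {x : Fin (n + 2) × Fin (n + 2) // x.1 ≠ x.2} with hI
    haveI : Nonempty I := ⟨⟨(0, 1), zero_ne_one⟩⟩
    obtain ⟨C, hC, hkey⟩ :=
      exists_uniform_direction_bound (E := EuclideanSpace ℝ (Fin k)) I
    refine ⟨C, hC, fun r hr p hp => ?_⟩
    have hne : ∀ i j : Fin (n + 2), i ≠ j → p i - p j ≠ 0 := by
      intro i j hij h
      have h1 := hp i j hij
      rw [sub_eq_zero] at h
      rw [h, dist_self] at h1
      linarith
    set q : I → EuclideanSpace ℝ (Fin k) :=
      fun m => ‖p m.1.1 - p m.1.2‖⁻¹ • (p m.1.1 - p m.1.2) with hqdef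
    have hq1 : ∀ m, ‖q m‖ = 1 := by
      intro m
      rw [hqdef]
      simp only
      rw [norm_smul, norm_inv, norm_norm,
        inv_mul_cancel₀ (norm_ne_zero_iff.mpr (hne _ _ m.2))]
    obtain ⟨v, hv1, hv⟩ := hkey q hq1
    refine ⟨v, hv1, fun i j hij => ?_⟩
    have hd : p i - p j ≠ 0 := hne i j hij
    have hproj : dist (Submodule.orthogonalProjectionOnto (Submodule.span ℝ {v}) (p i))
        (Submodule.orthogonalProjectionOnto (Submodule.span ℝ {v}) (p j)) = |⟪v, p i - p j⟫| := by
      rw [Subtype.dist_eq, dist_eq_norm, ← Submodule.coe_sub]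
      rw [Submodule.coe_sub]
      rw [Submodule.coe_orthogonalProjectionOnto_apply, Submodule.coe_orthogonalProjectionOnto_apply,
        Submodule.starProjection_unit_singleton ℝ hv1 (p i),
        Submodule.starProjection_unit_singleton ℝ hv1 (p j), ← sub_smul, norm_smul, hv1,
        mul_one, ← inner_sub_right, Real.norm_eq_abs]
    rw [hproj]
    have h1 : C ≤ |⟪q ⟨(i, j), hij⟩, v⟫| := hv _
    have h2 : ⟪q ⟨(i, j), hij⟩, v⟫ = ‖p i - p j‖⁻¹ * ⟪p i - p j, v⟫ := by
      rw [hqdef]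
      simp only
      rw [real_inner_smul_left]
    have hnorm : (0:ℝ) < ‖p i - p j‖ := norm_pos_iff.mpr hd
    have h3 : |⟪q ⟨(i, j), hij⟩, v⟫| = ‖p i - p j‖⁻¹ * |⟪p i - p j, v⟫| := by
      rw [h2, abs_mul, abs_of_pos (inv_pos.mpr hnorm)]
    have h4 : C * ‖p i - p j‖ ≤ |⟪p i - p j, v⟫| := by
      rw [h3] at h1
      calc C * ‖p i - p j‖ ≤ (‖p i - p j‖⁻¹ * |⟪p i - p j, v⟫|) * ‖p i - p j‖ := by
            exact mul_le_mul_of_nonneg_right h1 hnorm.le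
        _ = |⟪p i - p j, v⟫| := by field_simp
    have h5 : r ≤ ‖p i - p j‖ := by
      have := hp i j hij
      rwa [dist_eq_norm] at this
    calc C * r ≤ C * ‖p i - p j‖ := by nlinarith
      _ ≤ |⟪p i - p j, v⟫| := h4
      _ = |⟪v, p i - p j⟫| := by rw [real_inner_comm]
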